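/- Let G be a finite simple graph with n vertices and minimum degree δ ≥ 99. Then the signed domination number of G satisfies γ_s(G) ≤ (4·√(ln(δ+1)/(δ+1)) + 1/(δ+1)) · n. -/

import Mathlib

/-- `f : V → ℤ` is a signed domination function of `G`: it takes values in `{-1, +1}`
and sums to at least `1` over every closed neighbourhood. -/
def SimpleGraph.IsSignedDominationFunction {V : Type*} [Fintype V] [DecidableEq V]
    (G : SimpleGraph V) [DecidableRel G.Adj] (f : V → ℤ) : Prop :=
  (∀ v, f v = 1 ∨ f v = -1) ∧
  ∀ v : V, 1 ≤ ∑ u ∈ insert v (G.neighborFinset v), f u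

/-- The signed domination number `γ_s(G)`. -/
noncomputable def SimpleGraph.signedDominationNumber {V : Type*} [Fintype V] [DecidableEq V]
    (G : SimpleGraph V) [DecidableRel G.Adj] : ℤ :=
  sInf {s : ℤ | ∃ f : V → ℤ, G.IsSignedDominationFunction f ∧ s = ∑ v, f v}


open Finset

namespace SDFAux

variable {V : Type*} [Fintype V] [DecidableEq V] (G : SimpleGraph V) [DecidableRel G.Adj]

/-- closed neighbourhood -/
def CN (v : V) : Finset V := insert v (G.neighborFinset v)

lemma card_CN (v : V) : (CN G v).card = G.degree v + 1 := by
  rw [CN, card_insert_of_notMem (G.notMem_neighborFinset_self v),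
    G.card_neighborFinset_eq_degree]

def bsgn (b : Bool) : ℤ := if b then 1 else -1

def SB (f : V → Bool) (v : V) : ℤ := ∑ u ∈ CN G v, bsgn (f u)

def Bad (f : V → Bool) : Finset V := Finset.univ.filter (fun v => SB G f v ≤ 0)

def costZ (f : V → Bool) : ℤ :=
  (∑ v, bsgn (f v)) + ∑ v ∈ Bad G f, 2 * ((G.degree v : ℤ) + 1)

lemma fix_exists (f : V → Bool) :
    ∃ g : V → ℤ, G.IsSignedDominationFunction g ∧ ∑ v, g v ≤ costZ G f := by
  classical
  set F : Finset V := (Bad G f).biUnion (fun v => CN G v) with hF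
  refine ⟨fun u => if (f u = true ∨ u ∈ F) then 1 else -1, ⟨?_, ?_⟩, ?_⟩
  · intro v; by_cases h : (f v = true ∨ v ∈ F) <;> simp [h]
  · intro v
    by_cases hv : v ∈ Bad G f
    · have h1 : ∀ u ∈ CN G v, (if (f u = true ∨ u ∈ F) then (1:ℤ) else -1) = 1 := by
        intro u hu
        have : u ∈ F := mem_biUnion.2 ⟨v, hv, hu⟩
        simp [this]
      rw [show insert v (G.neighborFinset v) = CN G v from rfl, Finset.sum_congr rfl h1,
        Finset.sum_const, card_CN]
      have : (0:ℤ) ≤ (G.degree v : ℤ) := Int.natCast_nonneg _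
      simp only [nsmul_eq_mul, mul_one]
      push_cast
      omega
    · have hv' : 1 ≤ SB G f v := by
        simp only [Bad, mem_filter, mem_univ, true_and, not_le] at hv
        omega
      refine le_trans hv' (Finset.sum_le_sum ?_)
      intro u hu
      by_cases h : (f u = true ∨ u ∈ F) <;> cases hfu : f u <;> simp [bsgn, h, hfu] at * <;> omega
  · have key : ∀ v, (if (f v = true ∨ v ∈ F) then (1:ℤ) else -1) ≤
        bsgn (f v) + (if v ∈ F then 2 else 0) := by
      intro v
      by_cases h1 : f v = true <;> by_cases h2 : v ∈ F <;> simp [bsgn, h1, h2]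
    calc ∑ v, (if (f v = true ∨ v ∈ F) then (1:ℤ) else -1)
        ≤ ∑ v, (bsgn (f v) + (if v ∈ F then 2 else 0)) := Finset.sum_le_sum fun v _ => key v
      _ = (∑ v, bsgn (f v)) + ∑ v, (if v ∈ F then (2:ℤ) else 0) := Finset.sum_add_distrib
      _ ≤ costZ G f := by
          rw [costZ]
          gcongr
          calc ∑ v, (if v ∈ F then (2:ℤ) else 0)
              = ∑ v ∈ univ ∩ F, (2:ℤ) := Finset.sum_ite_mem _ _ _
            _ = 2 * F.card := by rw [univ_inter, Finset.sum_const]; ring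
            _ ≤ 2 * ∑ v ∈ Bad G f, ((CN G v).card : ℤ) := by
                have h := Finset.card_biUnion_le (s := Bad G f) (t := fun v => CN G v)
                have h2 : (F.card : ℤ) ≤ ∑ v ∈ Bad G f, ((CN G v).card : ℤ) := by
                  rw [hF]; exact_mod_cast h
                linarith
            _ = ∑ v ∈ Bad G f, 2 * ((G.degree v : ℤ) + 1) := by
                rw [Finset.mul_sum]
                refine Finset.sum_congr rfl fun v _ => ?_
                rw [card_CN]; push_cast; ring

end SDFAux

namespace SDFAux

open Finset

variable {V : Type*} [Fintype V] [DecidableEq V]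

/-- real sign -/
def bR (b : Bool) : ℝ := if b then 1 else -1

lemma bsgn_cast (b : Bool) : ((bsgn b : ℤ) : ℝ) = bR b := by
  cases b <;> simp [bsgn, bR]

lemma factor (g : V → Bool → ℝ) :
    ∑ f : V → Bool, ∏ v, g v (f v) = ∏ v, (g v true + g v false) := by
  have h := Finset.prod_univ_sum (fun _ : V => (Finset.univ : Finset Bool)) g
  rw [Fintype.piFinset_univ] at h
  rw [← h]
  exact Finset.prod_congr rfl fun v _ => by rw [Fintype.sum_bool]

section W
variable (p q : ℝ)

/-- weight of one coordinate -/
def w (b : Bool) : ℝ := if b then q else p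

/-- weight of an assignment -/
def W (f : V → Bool) : ℝ := ∏ v, w p q (f v)

lemma W_pos (hp : 0 < p) (hq : 0 < q) (f : V → Bool) : 0 < W p q f :=
  Finset.prod_pos fun v _ => by cases hv : f v <;> simp [w, hv, hp, hq]

lemma sum_W (hpq : q + p = 1) : ∑ f : V → Bool, W p q f = 1 := by
  simp only [W]
  rw [factor (fun _ b => w p q b)]
  simp [w, hpq]

lemma sum_W_sign (hpq : q + p = 1) (v : V) : ∑ f : V → Bool, W p q f * bR (f v) = q - p := by
  have h1 : ∀ f : V → Bool, W p q f * bR (f v)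
      = ∏ u, (w p q (f u) * (if u = v then bR (f u) else 1)) := by
    intro f
    rw [Finset.prod_mul_distrib, Finset.prod_ite_eq' Finset.univ v (fun u => bR (f u))]
    simp [W]
  simp_rw [h1]
  rw [factor (fun u b => w p q b * (if u = v then bR b else 1))]
  have h2 : ∀ u : V, (w p q true * (if u = v then bR true else 1)
      + w p q false * (if u = v then bR false else 1)) = if u = v then q - p else q + p := by
    intro u; by_cases h : u = v <;> simp [w, bR, h] <;> ring
  calc ∏ u, (w p q true * (if u = v then bR true else 1)
        + w p q false * (if u = v then bR false else 1))
      = ∏ u, (if u = v then q - p else 1) := by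
        refine Finset.prod_congr rfl fun u _ => ?_
        rw [h2]
        by_cases h : u = v <;> simp [h, hpq]
    _ = q - p := by rw [Finset.prod_ite_eq' Finset.univ v (fun _ => q - p)]; simp

end W

end SDFAux

namespace SDFAux

open Finset

variable {V : Type*} [Fintype V] [DecidableEq V] (G : SimpleGraph V) [DecidableRel G.Adj]

noncomputable def hB (lam : ℝ) (b : Bool) : ℝ := if b then lam⁻¹ else lam

lemma ind_le_prod (lam : ℝ) (hlam : 1 ≤ lam) (f : V → Bool) (v : V) :
    (if SB G f v ≤ 0 then (1:ℝ) else 0) ≤ ∏ u ∈ CN G v, hB lam (f u) := by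
  have hl0 : (0:ℝ) < lam := lt_of_lt_of_le one_pos hlam
  set T := CN G v with hT
  set a := (T.filter (fun u => f u = true)).card with ha
  set b := (T.filter (fun u => ¬ (f u = true))).card with hb
  have hprod : ∏ u ∈ T, hB lam (f u) = lam⁻¹ ^ a * lam ^ b := by
    rw [← Finset.prod_filter_mul_prod_filter_not T (fun u => f u = true)]
    congr 1
    · rw [← Finset.prod_const]
      exact Finset.prod_congr rfl fun u hu => by simp [hB, (Finset.mem_filter.1 hu).2]
    · rw [← Finset.prod_const]
      refine Finset.prod_congr rfl fun u hu => ?_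
      have := (Finset.mem_filter.1 hu).2
      cases hfu : f u
      · simp [hB]
      · exact absurd hfu this
  have hSB : SB G f v = (a:ℤ) - b := by
    rw [SB, ← Finset.sum_filter_add_sum_filter_not T (fun u => f u = true)]
    have h1 : ∑ u ∈ T.filter (fun u => f u = true), bsgn (f u) = (a:ℤ) := by
      have e : ∀ u ∈ T.filter (fun u => f u = true), bsgn (f u) = 1 :=
        fun u hu => by simp [bsgn, (Finset.mem_filter.1 hu).2]
      rw [Finset.sum_congr rfl e, Finset.sum_const, ha]
      simp
    have h2 : ∑ u ∈ T.filter (fun u => ¬(f u = true)), bsgn (f u) = -(b:ℤ) := by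
      have e : ∀ u ∈ T.filter (fun u => ¬(f u = true)), bsgn (f u) = -1 := by
        intro u hu
        have := (Finset.mem_filter.1 hu).2
        cases hfu : f u
        · simp [bsgn]
        · exact absurd hfu this
      rw [Finset.sum_congr rfl e, Finset.sum_const, hb]
      simp
    rw [h1, h2]
    ring
  by_cases hs : SB G f v ≤ 0
  · rw [if_pos hs, hprod]
    have hab : a ≤ b := by
      rw [hSB] at hs
      exact_mod_cast by omega
    have hpow : lam ^ a ≤ lam ^ b := pow_le_pow_right₀ hlam hab
    rw [inv_pow, inv_mul_eq_div]
    exact (one_le_div (pow_pos hl0 a)).2 hpow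
  · rw [if_neg hs]
    refine Finset.prod_nonneg fun u _ => ?_
    cases hfu : f u <;> simp [hB] <;> positivity

lemma chernoff (p q : ℝ) (hp : 0 < p) (hq : 0 < q) (hpq : q + p = 1) (lam : ℝ) (hlam : 1 ≤ lam) (v : V) :
    ∑ f : V → Bool, W p q f * (if SB G f v ≤ 0 then (1:ℝ) else 0)
      ≤ (q * lam⁻¹ + p * lam) ^ (G.degree v + 1) := by
  have step1 : ∑ f : V → Bool, W p q f * (if SB G f v ≤ 0 then (1:ℝ) else 0)
      ≤ ∑ f : V → Bool, W p q f * ∏ u ∈ CN G v, hB lam (f u) := by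
    refine Finset.sum_le_sum fun f _ => ?_
    exact mul_le_mul_of_nonneg_left (ind_le_prod G lam hlam f v) (W_pos p q hp hq f).le
  refine step1.trans ?_
  have hrw : ∀ f : V → Bool, W p q f * ∏ u ∈ CN G v, hB lam (f u)
      = ∏ u, (w p q (f u) * (if u ∈ CN G v then hB lam (f u) else 1)) := by
    intro f
    rw [Finset.prod_mul_distrib, Finset.prod_ite_mem Finset.univ (CN G v)
      (fun u => hB lam (f u)), Finset.univ_inter]
    rfl
  simp_rw [hrw]
  rw [factor (fun u b => w p q b * (if u ∈ CN G v then hB lam b else 1))]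
  have h2 : ∀ u : V, (w p q true * (if u ∈ CN G v then hB lam true else 1)
      + w p q false * (if u ∈ CN G v then hB lam false else 1))
      = if u ∈ CN G v then q * lam⁻¹ + p * lam else q + p := by
    intro u; by_cases h : u ∈ CN G v <;> simp [w, hB, h]
  refine le_of_eq ?_
  calc ∏ u, (w p q true * (if u ∈ CN G v then hB lam true else 1)
        + w p q false * (if u ∈ CN G v then hB lam false else 1))
      = ∏ u, (if u ∈ CN G v then q * lam⁻¹ + p * lam else 1) := by
        refine Finset.prod_congr rfl fun u _ => ?_
        rw [h2 u, hpq]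
    _ = ∏ u ∈ Finset.univ ∩ CN G v, (q * lam⁻¹ + p * lam) :=
        Finset.prod_ite_mem Finset.univ (CN G v) (fun _ => q * lam⁻¹ + p * lam)
    _ = (q * lam⁻¹ + p * lam) ^ (G.degree v + 1) := by
        rw [Finset.univ_inter, Finset.prod_const, card_CN]

end SDFAux

namespace SDFAux

lemma log_le_five {M : ℝ} (hM : 100 ≤ M) : 16 * Real.log M < M := by
  have hpos : (0:ℝ) < M := by linarith
  have h1 : Real.log M = Real.log 100 + Real.log (M / 100) := by
    rw [← Real.log_mul (by norm_num) (by positivity)]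
    congr 1
    ring
  have h2 : Real.log (M / 100) ≤ M / 100 - 1 :=
    Real.log_le_sub_one_of_pos (by positivity)
  have h3 : Real.log 100 ≤ 5 := by
    rw [Real.log_le_iff_le_exp (by norm_num)]
    have h5 : (2.7182818283:ℝ)^(5:ℕ) ≤ Real.exp 1 ^ (5:ℕ) :=
      pow_le_pow_left₀ (by norm_num) Real.exp_one_gt_d9.le 5
    have : Real.exp 1 ^ (5:ℕ) = Real.exp 5 := by
      rw [← Real.exp_nat_mul]; norm_num
    nlinarith [h5]
  linarith

lemma four_le_log {M : ℝ} (hM : 100 ≤ M) : 4 ≤ Real.log M := by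
  have h1 : Real.exp 4 ≤ 100 := by
    have h5 : Real.exp 1 ^ (4:ℕ) ≤ (2.7182818286:ℝ)^(4:ℕ) :=
      pow_le_pow_left₀ (Real.exp_pos 1).le Real.exp_one_lt_d9.le 4
    have : Real.exp 1 ^ (4:ℕ) = Real.exp 4 := by
      rw [← Real.exp_nat_mul]; norm_num
    nlinarith [h5]
  rw [Real.le_log_iff_exp_le (by linarith)]
  linarith

lemma per_vertex {M : ℝ} (hM : 100 ≤ M) (k : ℕ) (hk : M ≤ (k:ℝ)) :
    2 * (k:ℝ) * (Real.sqrt (1 - 16 * (Real.log M / M)))^k ≤ 1 / M := by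
  have hMpos : (0:ℝ) < M := by linarith
  set L : ℝ := Real.log M / M with hLdef
  have hlog4 : 4 ≤ Real.log M := four_le_log hM
  have hL0 : 0 ≤ L := div_nonneg (by linarith) hMpos.le
  have hk0 : (0:ℝ) < (k:ℝ) := lt_of_lt_of_le hMpos hk
  -- r ≤ exp (-(8 L))
  have hr : Real.sqrt (1 - 16*L) ≤ Real.exp (-(8*L)) := by
    have h1 : 1 - 16*L ≤ Real.exp (-(16*L)) := by
      have := Real.add_one_le_exp (-(16*L)); linarith
    have h2 : Real.exp (-(16*L)) = (Real.exp (-(8*L)))^(2:ℕ) := by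
      rw [← Real.exp_nat_mul]; ring_nf
    calc Real.sqrt (1 - 16*L) ≤ Real.sqrt (Real.exp (-(16*L))) := Real.sqrt_le_sqrt h1
      _ = Real.exp (-(8*L)) := by rw [h2, Real.sqrt_sq (Real.exp_pos _).le]
  have hrk : (Real.sqrt (1 - 16*L))^k ≤ Real.exp (-(8*L*(k:ℝ))) := by
    calc (Real.sqrt (1 - 16*L))^k ≤ (Real.exp (-(8*L)))^k :=
          pow_le_pow_left₀ (Real.sqrt_nonneg _) hr k
      _ = Real.exp (-(8*L*(k:ℝ))) := by
          rw [← Real.exp_nat_mul]; ring_nf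
  -- key exponential bound
  have hkey : 2*(k:ℝ)*M ≤ Real.exp (8*L*(k:ℝ)) := by
    have hc0 : 0 ≤ (8*(k:ℝ) - 2*M) * Real.log M / M := by
      apply div_nonneg _ hMpos.le
      apply mul_nonneg (by linarith) (by linarith)
    have hsplit : 8*L*(k:ℝ) = 2*Real.log M + (8*(k:ℝ) - 2*M) * Real.log M / M := by
      rw [hLdef]; field_simp; ring
    have hexp2 : Real.exp (2*Real.log M) = M^2 := by
      rw [show (2:ℝ)*Real.log M = ((2:ℕ):ℝ)*Real.log M by norm_num, Real.exp_nat_mul,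
        Real.exp_log hMpos]
    have hcge : (24*(k:ℝ))/M ≤ (8*(k:ℝ) - 2*M) * Real.log M / M := by
      refine (div_le_div_iff_of_pos_right hMpos).2 ?_
      nlinarith [mul_le_mul_of_nonneg_left hlog4 (show (0:ℝ) ≤ 8*(k:ℝ)-2*M by linarith)]
    have hec : (8*(k:ℝ) - 2*M) * Real.log M / M ≤ Real.exp ((8*(k:ℝ) - 2*M) * Real.log M / M) := by
      have := Real.add_one_le_exp ((8*(k:ℝ) - 2*M) * Real.log M / M); linarith
    calc 2*(k:ℝ)*M ≤ M^2 * ((24*(k:ℝ))/M) := by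
          rw [show M^2 * ((24*(k:ℝ))/M) = 24*(k:ℝ)*M by field_simp]
          nlinarith
      _ ≤ M^2 * ((8*(k:ℝ) - 2*M) * Real.log M / M) := by
          apply mul_le_mul_of_nonneg_left hcge (by positivity)
      _ ≤ M^2 * Real.exp ((8*(k:ℝ) - 2*M) * Real.log M / M) := by
          apply mul_le_mul_of_nonneg_left hec (by positivity)
      _ = Real.exp (8*L*(k:ℝ)) := by rw [hsplit, Real.exp_add, hexp2]
  -- conclude
  have hfin : 2*(k:ℝ) * Real.exp (-(8*L*(k:ℝ))) ≤ 1/M := by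
    rw [Real.exp_neg]
    rw [mul_inv_le_iff₀ (Real.exp_pos _)]
    rw [mul_comm (1/M)]
    calc 2*(k:ℝ) = (1/M) * (2*(k:ℝ)*M) := by field_simp
      _ ≤ (1/M) * Real.exp (8*L*(k:ℝ)) := by
          apply mul_le_mul_of_nonneg_left hkey (by positivity)
      _ = Real.exp (8*L*(k:ℝ)) * (1/M) := mul_comm _ _
  calc 2*(k:ℝ)*(Real.sqrt (1 - 16*L))^k ≤ 2*(k:ℝ)*Real.exp (-(8*L*(k:ℝ))) := by
        apply mul_le_mul_of_nonneg_left hrk (by linarith)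
    _ ≤ 1/M := hfin

lemma r_value {L : ℝ} (hL0 : 0 ≤ L) (h16 : 16*L < 1) :
    ((1+4*Real.sqrt L)/2) * (Real.sqrt (((1+4*Real.sqrt L)/2)/((1-4*Real.sqrt L)/2)))⁻¹
      + ((1-4*Real.sqrt L)/2) * Real.sqrt (((1+4*Real.sqrt L)/2)/((1-4*Real.sqrt L)/2))
    = Real.sqrt (1-16*L) := by
  set s := Real.sqrt L with hs
  have hs0 : 0 ≤ s := Real.sqrt_nonneg _
  have hs2 : s^2 = L := Real.sq_sqrt hL0
  have hs1 : 4*s < 1 := by nlinarith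
  set p : ℝ := (1-4*s)/2 with hp
  set q : ℝ := (1+4*s)/2 with hq
  have hp0 : 0 < p := by rw [hp]; linarith
  have hq0 : 0 < q := by rw [hq]; linarith
  have hdiv : Real.sqrt (q/p) = Real.sqrt q / Real.sqrt p := Real.sqrt_div hq0.le p
  have hinv : (Real.sqrt (q/p))⁻¹ = Real.sqrt p / Real.sqrt q := by
    rw [hdiv, inv_div]
  have hqs : q / Real.sqrt q = Real.sqrt q := Real.div_sqrt
  have hps : p / Real.sqrt p = Real.sqrt p := Real.div_sqrt
  have h1 : q * (Real.sqrt (q/p))⁻¹ = Real.sqrt p * Real.sqrt q := by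
    rw [hinv, show q * (Real.sqrt p / Real.sqrt q) = Real.sqrt p * (q / Real.sqrt q) by ring,
      hqs]
  have h2 : p * Real.sqrt (q/p) = Real.sqrt p * Real.sqrt q := by
    rw [hdiv, show p * (Real.sqrt q / Real.sqrt p) = Real.sqrt q * (p / Real.sqrt p) by ring,
      hps]
    ring
  rw [h1, h2, ← two_mul, ← Real.sqrt_mul hp0.le]
  have hpq : p * q = (1 - 16*L)/4 := by
    rw [hp, hq, ← hs2]; ring
  rw [hpq, Real.sqrt_div (by linarith) 4,
    show Real.sqrt 4 = 2 by rw [show (4:ℝ) = 2^2 by norm_num, Real.sqrt_sq (by norm_num)]]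
  ring

end SDFAux

theorem signed_domination_upper_bound_furedi_mubayi
    {V : Type*} [Fintype V] [DecidableEq V] [Nonempty V]
    (G : SimpleGraph V) [DecidableRel G.Adj]
    (δ : ℕ) (hδdef : δ = G.minDegree) (hδ : 99 ≤ δ) :
    (G.signedDominationNumber : ℝ) ≤
      (4 * Real.sqrt (Real.log ((δ : ℝ) + 1) / ((δ : ℝ) + 1)) + 1 / ((δ : ℝ) + 1)) *
        (Fintype.card V : ℝ) := by
  classical
  open Finset SDFAux in
  set M : ℝ := (δ : ℝ) + 1 with hMdef
  have hM100 : 100 ≤ M := by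
    have : (99:ℝ) ≤ (δ:ℝ) := by exact_mod_cast hδ
    rw [hMdef]; linarith
  have hMpos : (0:ℝ) < M := by linarith
  set L : ℝ := Real.log M / M with hLdef
  have hlogpos : (0:ℝ) ≤ Real.log M := by
    have := SDFAux.four_le_log hM100; linarith
  have hL0 : (0:ℝ) ≤ L := div_nonneg hlogpos hMpos.le
  have h16L : 16 * L < 1 := by
    have h := SDFAux.log_le_five hM100
    rw [hLdef]
    rw [show 16 * (Real.log M / M) = (16 * Real.log M) / M by ring]
    rw [div_lt_one hMpos]
    exact h
  set ε : ℝ := 4 * Real.sqrt L with hεdef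
  have hε0 : 0 ≤ ε := by positivity
  have hε1 : ε < 1 := by
    have h1 : ε^2 = 16 * L := by
      rw [hεdef, mul_pow, Real.sq_sqrt hL0]; ring
    nlinarith
  set p : ℝ := (1 - ε)/2 with hpdef
  set q : ℝ := (1 + ε)/2 with hqdef
  have hp : 0 < p := by rw [hpdef]; linarith
  have hq : 0 < q := by rw [hqdef]; linarith
  have hpq : q + p = 1 := by rw [hpdef, hqdef]; ring
  set lam : ℝ := Real.sqrt (q/p) with hlamdef
  have hlam : 1 ≤ lam := by
    rw [hlamdef, Real.one_le_sqrt]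
    rw [le_div_iff₀ hp]
    rw [hpdef, hqdef]; linarith
  have hrval : q * lam⁻¹ + p * lam = Real.sqrt (1 - 16*L) :=
    SDFAux.r_value hL0 h16L
  set n : ℝ := (Fintype.card V : ℝ) with hndef
  -- expectation bound
  have hexp : ∑ f : V → Bool, SDFAux.W p q f * ((SDFAux.costZ G f : ℤ) : ℝ)
      ≤ (ε + 1/M) * n := by
    have hcost : ∀ f : V → Bool, ((SDFAux.costZ G f : ℤ) : ℝ)
        = (∑ v, SDFAux.bR (f v))
          + ∑ v, (2*((G.degree v:ℝ)+1)) * (if SDFAux.SB G f v ≤ 0 then (1:ℝ) else 0) := by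
      intro f
      rw [SDFAux.costZ]
      push_cast
      congr 1
      · exact Finset.sum_congr rfl fun v _ => SDFAux.bsgn_cast (f v)
      · rw [SDFAux.Bad, Finset.sum_filter]
        exact Finset.sum_congr rfl fun v _ => by by_cases h : SDFAux.SB G f v ≤ 0 <;> simp [h]
    calc ∑ f : V → Bool, SDFAux.W p q f * ((SDFAux.costZ G f : ℤ) : ℝ)
        = (∑ f : V → Bool, SDFAux.W p q f * (∑ v, SDFAux.bR (f v)))
          + ∑ f : V → Bool, SDFAux.W p q f *
            (∑ v, (2*((G.degree v:ℝ)+1)) * (if SDFAux.SB G f v ≤ 0 then (1:ℝ) else 0)) := by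
          rw [← Finset.sum_add_distrib]
          refine Finset.sum_congr rfl fun f _ => ?_
          rw [hcost f]; ring
      _ = (∑ v : V, ∑ f : V → Bool, SDFAux.W p q f * SDFAux.bR (f v))
          + ∑ v : V, (2*((G.degree v:ℝ)+1)) *
            (∑ f : V → Bool, SDFAux.W p q f * (if SDFAux.SB G f v ≤ 0 then (1:ℝ) else 0)) := by
          congr 1
          · rw [Finset.sum_comm]
            exact Finset.sum_congr rfl fun f _ => by rw [Finset.mul_sum]
          · calc ∑ f : V → Bool, SDFAux.W p q f *
                  (∑ v, (2*((G.degree v:ℝ)+1)) * (if SDFAux.SB G f v ≤ 0 then (1:ℝ) else 0))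
                = ∑ f : V → Bool, ∑ v, SDFAux.W p q f *
                    ((2*((G.degree v:ℝ)+1)) * (if SDFAux.SB G f v ≤ 0 then (1:ℝ) else 0)) :=
                  Finset.sum_congr rfl fun f _ => Finset.mul_sum _ _ _
              _ = ∑ v : V, ∑ f : V → Bool, SDFAux.W p q f *
                    ((2*((G.degree v:ℝ)+1)) * (if SDFAux.SB G f v ≤ 0 then (1:ℝ) else 0)) :=
                  Finset.sum_comm
              _ = ∑ v : V, (2*((G.degree v:ℝ)+1)) *
                    (∑ f : V → Bool, SDFAux.W p q f * (if SDFAux.SB G f v ≤ 0 then (1:ℝ) else 0)) := by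
                  refine Finset.sum_congr rfl fun v _ => ?_
                  rw [Finset.mul_sum]
                  exact Finset.sum_congr rfl fun f _ => by ring
      _ ≤ (∑ v : V, ε) + ∑ v : V, 1/M := by
          gcongr with v hv v hv
          · rw [SDFAux.sum_W_sign p q hpq v]
            rw [hpdef, hqdef]; linarith
          · have hch := SDFAux.chernoff G p q hp hq hpq lam hlam v
            rw [hrval] at hch
            have hdeg : M ≤ ((G.degree v + 1 : ℕ) : ℝ) := by
              have h1 : δ ≤ G.degree v := hδdef ▸ G.minDegree_le_degree v
              rw [hMdef]
              push_cast
              have : (δ:ℝ) ≤ (G.degree v : ℝ) := by exact_mod_cast h1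
              linarith
            have hpv := SDFAux.per_vertex hM100 (G.degree v + 1) hdeg
            have hnn : (0:ℝ) ≤ 2*((G.degree v:ℝ)+1) := by positivity
            calc (2*((G.degree v:ℝ)+1)) *
                  (∑ f : V → Bool, SDFAux.W p q f * (if SDFAux.SB G f v ≤ 0 then (1:ℝ) else 0))
                ≤ (2*((G.degree v:ℝ)+1)) * (Real.sqrt (1 - 16*L))^(G.degree v + 1) :=
                  mul_le_mul_of_nonneg_left hch hnn
              _ = 2 * ((G.degree v + 1 : ℕ):ℝ) * (Real.sqrt (1 - 16*L))^(G.degree v + 1) := by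
                  push_cast; ring
              _ ≤ 1/M := hpv
      _ = (ε + 1/M) * n := by
          rw [Finset.sum_const, Finset.sum_const, hndef]
          simp [Finset.card_univ]
          ring
  -- averaging
  have hav : ∃ f : V → Bool, ((SDFAux.costZ G f : ℤ) : ℝ) ≤ (ε + 1/M) * n := by
    by_contra hcon
    push_neg at hcon
    have h1 : ∑ f : V → Bool, SDFAux.W p q f * ((ε + 1/M) * n)
        < ∑ f : V → Bool, SDFAux.W p q f * ((SDFAux.costZ G f : ℤ) : ℝ) := by
      refine Finset.sum_lt_sum_of_nonempty Finset.univ_nonempty fun f _ => ?_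
      exact mul_lt_mul_of_pos_left (hcon f) (SDFAux.W_pos p q hp hq f)
    rw [← Finset.sum_mul, SDFAux.sum_W p q hpq, one_mul] at h1
    linarith
  obtain ⟨f, hf⟩ := hav
  obtain ⟨g, hgSDF, hgsum⟩ := SDFAux.fix_exists G f
  -- sInf ≤ sum g
  have hmem : (∑ v, g v) ∈ {s : ℤ | ∃ f : V → ℤ, G.IsSignedDominationFunction f ∧ s = ∑ v, f v} :=
    ⟨g, hgSDF, rfl⟩
  have hbdd : BddBelow {s : ℤ | ∃ f : V → ℤ, G.IsSignedDominationFunction f ∧ s = ∑ v, f v} := by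
    refine ⟨-(Fintype.card V : ℤ), fun s hs => ?_⟩
    obtain ⟨f', hf', rfl⟩ := hs
    calc -(Fintype.card V : ℤ) = ∑ _v : V, (-1 : ℤ) := by
          rw [Finset.sum_const, Finset.card_univ]; ring
      _ ≤ ∑ v, f' v := Finset.sum_le_sum fun v _ => by rcases hf'.1 v with h | h <;> omega
  have hinf : G.signedDominationNumber ≤ ∑ v, g v := csInf_le hbdd hmem
  have hstep : (G.signedDominationNumber : ℝ) ≤ ((SDFAux.costZ G f : ℤ) : ℝ) := by
    have h1 : ((G.signedDominationNumber : ℤ) : ℝ) ≤ ((∑ v, g v : ℤ) : ℝ) :=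
      Int.cast_le.2 hinf
    have h2 : ((∑ v, g v : ℤ) : ℝ) ≤ ((SDFAux.costZ G f : ℤ) : ℝ) := Int.cast_le.2 hgsum
    linarith
  calc (G.signedDominationNumber : ℝ) ≤ ((SDFAux.costZ G f : ℤ) : ℝ) := hstep
    _ ≤ (ε + 1/M) * n := hf
    _ = (4 * Real.sqrt (Real.log ((δ : ℝ) + 1) / ((δ : ℝ) + 1)) + 1 / ((δ : ℝ) + 1)) *
        (Fintype.card V : ℝ) := by rw [hεdef, hLdef, hMdef, hndef]
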